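/- Let X be a positive-integer-valued random variable with mean ν, 0 ≤ γ' < 1, γ = G(γ') with G the generating function of X, and let X* ~ Bin(X,1-γ') conditioned on being positive. Then the total variation distance between the law of X* and the law of X is at most ν γ' / (1 - γ'). -/
import Mathlib


set_option maxHeartbeats 1000000 in
/-- Let `X` be positive-integer-valued with pmf `μ` and mean `ν`, `0 ≤ γ' < 1`,
`γ = G(γ')`, and let `X*` be the zero-truncated mixed binomial `Bin(X,1-γ')`
conditioned on positivity. Then the total variation distance between the law of
`X*` and the law of `X` is at most `ν γ' / (1-γ')`. -/
theorem stmt11 (μ : ℕ → ℝ) (hμnn : ∀ k, 0 ≤ μ k) (hμsum : ∑' k, μ k = 1)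
    (hμ0 : μ 0 = 0)
    (ν : ℝ) (hν : HasSum (fun (k : ℕ) => (k : ℝ) * μ k) ν)
    (γ' γ : ℝ) (hγ'nn : 0 ≤ γ') (hγ'lt : γ' < 1)
    (hγ : γ = ∑' d, μ d * γ' ^ d)
    (b : ℕ → ℝ)
    (hb : ∀ k, b k = ∑' d, μ d * (Nat.choose d k : ℝ) * (1 - γ') ^ k * γ' ^ (d - k)) :
    (1 / 2) * ∑' k : ℕ, |(if k = 0 then (0 : ℝ) else b k / (1 - γ)) - μ k|
      ≤ ν * γ' / (1 - γ') := by
  have hμs : Summable μ := by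
    by_contra h
    rw [tsum_eq_zero_of_not_summable h] at hμsum
    norm_num at hμsum
  have hγ'1 : (0:ℝ) < 1 - γ' := by linarith
  set f : ℕ → ℕ → ℝ := fun d k => μ d * (Nat.choose d k : ℝ) * (1 - γ') ^ k * γ' ^ (d - k)
    with hf_def
  have hfnn : ∀ d k, 0 ≤ f d k := fun d k => by
    apply mul_nonneg; apply mul_nonneg; apply mul_nonneg (hμnn d)
    · positivity
    · positivity
    · positivity
  -- each row has finite support
  have hrow_zero : ∀ d, ∀ k ∉ Finset.range (d + 1), f d k = 0 := by
    intro d k hk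
    simp only [Finset.mem_range, not_lt] at hk
    have : Nat.choose d k = 0 := Nat.choose_eq_zero_of_lt (by omega)
    simp [hf_def, this]
  have hrow_summable : ∀ d, Summable (f d) := fun d =>
    summable_of_ne_finset_zero (hrow_zero d)
  have hrow_sum : ∀ d, ∑' k, f d k = μ d := by
    intro d
    rw [tsum_eq_sum (hrow_zero d)]
    have : ∑ k ∈ Finset.range (d + 1), f d k
        = μ d * ∑ k ∈ Finset.range (d + 1), (1 - γ') ^ k * γ' ^ (d - k) * (Nat.choose d k : ℝ) := by
      rw [Finset.mul_sum]
      apply Finset.sum_congr rfl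
      intro k _
      simp [hf_def]; ring
    rw [this, ← add_pow]
    norm_num
  -- summability of the double series
  have hunc : Summable (Function.uncurry f) := by
    refine (summable_prod_of_nonneg (fun p => hfnn p.1 p.2)).mpr ⟨fun d => hrow_summable d, ?_⟩
    simpa only [hrow_sum] using hμs
  have hunc' : Summable (fun p : ℕ × ℕ => f p.2 p.1) :=
    (Equiv.prodComm ℕ ℕ).summable_iff.mpr hunc
  have hcol_summable : ∀ k, Summable (fun d => f d k) := by
    intro k
    exact ((summable_prod_of_nonneg (f := fun p : ℕ × ℕ => f p.2 p.1)
      (fun p => hfnn p.2 p.1)).mp hunc').1 k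
  have hb_eq : ∀ k, b k = ∑' d, f d k := fun k => hb k
  have hb_summable : Summable b := by
    have := ((summable_prod_of_nonneg (f := fun p : ℕ × ℕ => f p.2 p.1)
      (fun p => hfnn p.2 p.1)).mp hunc').2
    apply this.congr
    intro k; exact (hb_eq k).symm
  have hbnn : ∀ k, 0 ≤ b k := by
    intro k; rw [hb_eq k]
    exact tsum_nonneg (fun d => hfnn d k)
  have hb_total : ∑' k, b k = 1 := by
    have : ∑' k, b k = ∑' (k) (d), f d k := tsum_congr hb_eq
    rw [this, Summable.tsum_comm hunc]
    rw [tsum_congr hrow_sum, hμsum]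
  have hb0 : b 0 = γ := by
    rw [hb_eq 0, hγ]
    apply tsum_congr
    intro d
    simp [hf_def]
  -- γ bounds
  have hγnn : 0 ≤ γ := hb0 ▸ hbnn 0
  have hγle : γ ≤ γ' := by
    rw [hγ]
    have hsum1 : Summable (fun d => μ d * γ' ^ d) := by
      apply Summable.of_nonneg_of_le (fun d => mul_nonneg (hμnn d) (pow_nonneg hγ'nn d)) _ hμs
      intro d
      nlinarith [pow_le_one₀ hγ'nn hγ'lt.le (n := d), hμnn d, pow_nonneg hγ'nn d]
    calc ∑' d, μ d * γ' ^ d ≤ ∑' d, μ d * γ' := by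
          apply Summable.tsum_le_tsum _ hsum1 (hμs.mul_right γ')
          intro d
          match d with
          | 0 => simp [hμ0]
          | (n+1) =>
            apply mul_le_mul_of_nonneg_left _ (hμnn _)
            calc γ' ^ (n+1) ≤ γ' ^ 1 := pow_le_pow_of_le_one hγ'nn hγ'lt.le (by omega)
            _ = γ' := pow_one γ'
      _ = γ' := by rw [tsum_mul_right, hμsum, one_mul]
  have h1γ : (0:ℝ) < 1 - γ := by linarith
  -- the truncated pmf
  set a : ℕ → ℝ := fun k => if k = 0 then (0:ℝ) else b k / (1 - γ) with ha_def
  have hann : ∀ k, 0 ≤ a k := by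
    intro k; simp only [ha_def]
    split
    · exact le_refl 0
    · exact div_nonneg (hbnn k) h1γ.le
  have ha_summable : Summable a := by
    apply Summable.of_nonneg_of_le hann _ (hb_summable.div_const (1 - γ))
    intro k
    simp only [ha_def]
    split
    · exact div_nonneg (hbnn k) h1γ.le
    · exact le_refl _
  have ha_shift : ∀ k : ℕ, a (k + 1) = b (k + 1) / (1 - γ) := by
    intro k; simp [ha_def]
  have hb_shift_summable : Summable (fun k => b (k + 1) / (1 - γ)) :=
    ((summable_nat_add_iff 1).mpr hb_summable).div_const _
  have ha_total : ∑' k, a k = 1 := by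
    have h2 : ∑' k, b k / (1 - γ) = b 0 / (1 - γ) + ∑' k, b (k + 1) / (1 - γ) :=
      tsum_eq_zero_add' hb_shift_summable
    have h3 : ∑' k, b k / (1 - γ) = 1 / (1 - γ) := by
      rw [tsum_div_const, hb_total]
    have h4 : ∑' k, a k = a 0 + ∑' k, a (k + 1) :=
      tsum_eq_zero_add' (hb_shift_summable.congr (fun k => (ha_shift k).symm))
    have h5 : ∑' k, a (k + 1) = ∑' k, b (k + 1) / (1 - γ) := tsum_congr ha_shift
    have ha0 : a 0 = 0 := by simp [ha_def]
    rw [h4, ha0, zero_add, h5]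
    have : ∑' k, b (k + 1) / (1 - γ) = 1 / (1 - γ) - b 0 / (1 - γ) := by
      rw [← h3, h2]; ring
    rw [this, hb0]
    field_simp
  -- the minorant m
  set m : ℕ → ℝ := fun k => μ k * (1 - γ') ^ k with hm_def
  have hmnn : ∀ k, 0 ≤ m k := fun k => mul_nonneg (hμnn k) (by positivity)
  have hm_le_μ : ∀ k, m k ≤ μ k := by
    intro k
    have h1 : (1 - γ') ^ k ≤ 1 := pow_le_one₀ hγ'1.le (by linarith)
    calc m k = μ k * (1 - γ') ^ k := rfl
      _ ≤ μ k * 1 := mul_le_mul_of_nonneg_left h1 (hμnn k)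
      _ = μ k := mul_one _
  have hm_le_b : ∀ k, m k ≤ b k := by
    intro k
    have hdiag : f k k = m k := by
      simp [hf_def, hm_def]
    rw [hb_eq k, ← hdiag]
    exact Summable.le_tsum (hcol_summable k) k (fun d _ => hfnn d k)
  have hm_le_a : ∀ k, m k ≤ a k := by
    intro k
    match k with
    | 0 => simp [ha_def, hm_def, hμ0]
    | (n+1) =>
      have h1 : a (n+1) = b (n+1) / (1 - γ) := ha_shift n
      rw [h1, le_div_iff₀ h1γ]
      have h2 : m (n+1) * (1 - γ) ≤ m (n+1) := by nlinarith [hmnn (n+1)]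
      linarith [hm_le_b (n+1)]
  have hm_summable : Summable m :=
    Summable.of_nonneg_of_le hmnn hm_le_μ hμs
  -- pointwise bound on |a - μ|
  have habs : ∀ k, |a k - μ k| ≤ a k + μ k - 2 * m k := by
    intro k
    rw [abs_sub_le_iff]
    constructor <;> linarith [hm_le_a k, hm_le_μ k]
  have habs_summable : Summable (fun k => |a k - μ k|) := by
    apply Summable.of_nonneg_of_le (fun k => abs_nonneg _) _
      ((ha_summable.add hμs).sub (hm_summable.mul_left 2))
    intro k
    exact habs k
  -- lower bound on ∑ m via Bernoulli
  have hbern : ∀ k : ℕ, 1 - (k : ℝ) * γ' ≤ (1 - γ') ^ k := by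
    intro k
    have := one_add_mul_le_pow (show (-2:ℝ) ≤ -γ' by linarith) k
    calc 1 - (k : ℝ) * γ' = 1 + (k : ℝ) * (-γ') := by ring
      _ ≤ (1 + -γ') ^ k := this
      _ = (1 - γ') ^ k := by ring_nf
  have hkμ_summable : Summable (fun k : ℕ => (k : ℝ) * μ k) := hν.summable
  have hlow_summable : Summable (fun k : ℕ => μ k - γ' * ((k : ℝ) * μ k)) :=
    hμs.sub (hkμ_summable.mul_left γ')
  have hm_lower : 1 - γ' * ν ≤ ∑' k, m k := by
    have h1 : ∑' k, (μ k - γ' * ((k : ℝ) * μ k)) = 1 - γ' * ν := by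
      rw [Summable.tsum_sub hμs (hkμ_summable.mul_left γ'), hμsum, tsum_mul_left, hν.tsum_eq]
    rw [← h1]
    apply Summable.tsum_le_tsum _ hlow_summable hm_summable
    intro k
    have : μ k - γ' * ((k : ℝ) * μ k) = μ k * (1 - (k : ℝ) * γ') := by ring
    rw [this, hm_def]
    exact mul_le_mul_of_nonneg_left (hbern k) (hμnn k)
  have hνnn : 0 ≤ ν := by
    rw [← hν.tsum_eq]
    exact tsum_nonneg (fun k => mul_nonneg (Nat.cast_nonneg k) (hμnn k))
  -- final chain
  have hsum_bound : ∑' k, |a k - μ k| ≤ 2 * (γ' * ν) := by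
    calc ∑' k, |a k - μ k| ≤ ∑' k, (a k + μ k - 2 * m k) :=
          Summable.tsum_le_tsum habs habs_summable
            ((ha_summable.add hμs).sub (hm_summable.mul_left 2))
      _ = (∑' k, a k) + (∑' k, μ k) - 2 * ∑' k, m k := by
          rw [Summable.tsum_sub (ha_summable.add hμs) (hm_summable.mul_left 2),
            Summable.tsum_add ha_summable hμs, tsum_mul_left]
      _ = 2 - 2 * ∑' k, m k := by rw [ha_total, hμsum]; ring
      _ ≤ 2 - 2 * (1 - γ' * ν) := by linarith [hm_lower]
      _ = 2 * (γ' * ν) := by ring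
  calc (1 / 2) * ∑' k, |a k - μ k| ≤ (1 / 2) * (2 * (γ' * ν)) := by linarith [hsum_bound]
    _ = ν * γ' := by ring
    _ ≤ ν * γ' / (1 - γ') := by
        rw [le_div_iff₀ hγ'1]
        nlinarith [mul_nonneg hνnn hγ'nn]
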